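/- Let ψ(x,z) be the 2×2 matrix-valued function ψ = [[xz - 1, -z²],[0, xz]]·e^{xz}, and let L be the 3rd-order matrix differential operator L = I·∂_z³ + diag(-3/z, -3/z)·∂_z² + [[3/z², 3],[0, 6/z²]]·∂_z + [[0, -6/z],[0, -6/z³]]. Then L(ψ) = x³·ψ for all z ≠ 0. -/

import Mathlib

/-- Entrywise derivative of a matrix-valued function of a real variable. -/
noncomputable def matDeriv (f : ℝ → Matrix (Fin 2) (Fin 2) ℝ) :
    ℝ → Matrix (Fin 2) (Fin 2) ℝ :=
  fun z => Matrix.of fun i j => deriv (fun t => f t i j) z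

noncomputable def Eaux (x a b c : ℝ) : ℝ → ℝ := fun t => (a*t^2+b*t+c)*Real.exp (x*t)

lemma Eaux_deriv (x a b c z : ℝ) :
    deriv (Eaux x a b c) z = Eaux x (a*x) (2*a+b*x) (b+c*x) z := by
  have h1 : HasDerivAt (fun t : ℝ => a*t^2+b*t+c) (a*(2*z)+b) z := by
    have := (((hasDerivAt_pow 2 z).const_mul a).add ((hasDerivAt_id z).const_mul b)).add_const c
    simpa using this
  have h2 : HasDerivAt (fun t : ℝ => Real.exp (x*t)) (Real.exp (x*z)*x) z := by
    simpa using (((hasDerivAt_id z).const_mul x).exp)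
  have : deriv (fun t => (a*t^2+b*t+c)*Real.exp (x*t)) z = _ := (h1.mul h2).deriv
  unfold Eaux; rw [this]; ring

lemma mat_step (x a b c d e f g h i j k l : ℝ) (ψ : ℝ → Matrix (Fin 2) (Fin 2) ℝ)
    (hψ : ∀ t, ψ t = !![Eaux x a b c t, Eaux x d e f t; Eaux x g h i t, Eaux x j k l t]) :
    ∀ t, matDeriv ψ t = !![Eaux x (a*x) (2*a+b*x) (b+c*x) t, Eaux x (d*x) (2*d+e*x) (e+f*x) t;
      Eaux x (g*x) (2*g+h*x) (h+i*x) t, Eaux x (j*x) (2*j+k*x) (k+l*x) t] := by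
  intro t
  have hfun : ∀ i' j', (fun s => ψ s i' j') = fun s => (!![Eaux x a b c s, Eaux x d e f s; Eaux x g h i s, Eaux x j k l s] : Matrix (Fin 2) (Fin 2) ℝ) i' j' := by
    intro i' j'; funext s; rw [hψ]
  ext i' j'
  simp only [matDeriv, Matrix.of_apply, hfun]
  fin_cases i' <;> fin_cases j' <;>
    simp [Matrix.cons_val_zero, Matrix.cons_val_one, Eaux_deriv]

/-- The matrix generating function `ψ = [[xz-1, -z²],[0, xz]] e^{xz}` satisfies
`L(ψ) = x³ ψ` for `z ≠ 0`, where `L` is the stated 3rd-order matrix differential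
operator. -/
theorem stmt_18 (x : ℝ) (ψ : ℝ → Matrix (Fin 2) (Fin 2) ℝ)
    (hψ : ∀ z : ℝ, ψ z = Real.exp (x * z) • !![x * z - 1, -z ^ 2; 0, x * z]) :
    ∀ z : ℝ, z ≠ 0 →
      (1 : Matrix (Fin 2) (Fin 2) ℝ) * matDeriv (matDeriv (matDeriv ψ)) z +
          !![-3 / z, 0; 0, -3 / z] * matDeriv (matDeriv ψ) z +
          !![3 / z ^ 2, 3; 0, 6 / z ^ 2] * matDeriv ψ z +
          !![0, -6 / z; 0, -6 / z ^ 3] * ψ z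
        = x ^ 3 • ψ z := by
  have hψ' : ∀ t, ψ t = !![Eaux x 0 x (-1) t, Eaux x (-1) 0 0 t; Eaux x 0 0 0 t, Eaux x 0 x 0 t] := by
    intro t; rw [hψ]; ext i j; fin_cases i <;> fin_cases j <;> simp [Eaux] <;> ring
  have h1 := mat_step x 0 x (-1) (-1) 0 0 0 0 0 0 x 0 ψ hψ'
  have h2 := mat_step x _ _ _ _ _ _ _ _ _ _ _ _ (matDeriv ψ) h1
  have h3 := mat_step x _ _ _ _ _ _ _ _ _ _ _ _ (matDeriv (matDeriv ψ)) h2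
  intro z hz
  rw [hψ', h1, h2, h3]
  ext i j
  fin_cases i <;> fin_cases j <;>
    · simp [Matrix.mul_apply, Fin.sum_univ_succ, Eaux]
      try field_simp
      try ring
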